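/- Let X ∈ ℝ^{n×d} with n ≤ d and X X^T invertible, and σ > 0. For A_ols = X^T(XX^T)^{-1} and A_ridge = (X^T X + dσ² I)^{-1} X^T, with P(A) = (1/d)‖AX − I‖_F² + σ²‖A‖_F², one has P(A_ols) − P(A_ridge) = −n/d + σ² Tr((XX^T)^{-1}) + (1/d) Tr(XX^T (XX^T + dσ² I)^{-1}). -/

import Mathlib

open Matrix

/-- Squared Frobenius norm. -/
noncomputable def frobSq {m k : ℕ} (A : Matrix (Fin m) (Fin k) ℝ) : ℝ :=
  Matrix.trace (Aᵀ * A)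

/-- Prediction error functional in the isotropic case:
`P(A) = (1/d)‖AX − I‖_F² + σ²‖A‖_F²`. -/
noncomputable def predErrIso (n d : ℕ) (X : Matrix (Fin n) (Fin d) ℝ)
    (σ : ℝ) (A : Matrix (Fin d) (Fin n) ℝ) : ℝ :=
  (1 / (d : ℝ)) * frobSq (A * X - 1) + σ ^ 2 * frobSq A

lemma smul_one_posDef {k : ℕ} {c : ℝ} (hc : 0 < c) :
    (c • (1 : Matrix (Fin k) (Fin k) ℝ)).PosDef := by
  rw [Matrix.smul_one_eq_diagonal]
  exact Matrix.posDef_diagonal_iff.2 fun _ => hc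

/-- For `A_ols = Xᵀ(XXᵀ)⁻¹` and `A_ridge = (XᵀX + dσ²I)⁻¹Xᵀ`,
`P(A_ols) − P(A_ridge) = −n/d + σ² Tr((XXᵀ)⁻¹) + (1/d) Tr(XXᵀ(XXᵀ + dσ²I)⁻¹)`. -/
theorem stmt16 (n d : ℕ) (hnd : n ≤ d) (hd : 0 < d)
    (X : Matrix (Fin n) (Fin d) ℝ) (hX : IsUnit (X * Xᵀ).det)
    (σ : ℝ) (hσ : 0 < σ) :
    predErrIso n d X σ (Xᵀ * (X * Xᵀ)⁻¹)
        - predErrIso n d X σ ((Xᵀ * X + ((d : ℝ) * σ ^ 2) • 1)⁻¹ * Xᵀ)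
      = -((n : ℝ) / (d : ℝ)) + σ ^ 2 * Matrix.trace (X * Xᵀ)⁻¹
        + (1 / (d : ℝ)) * Matrix.trace (X * Xᵀ * (X * Xᵀ + ((d : ℝ) * σ ^ 2) • 1)⁻¹) := by
  set c : ℝ := (d : ℝ) * σ ^ 2 with hc_def
  have hc : 0 < c := by positivity
  set G : Matrix (Fin n) (Fin n) ℝ := X * Xᵀ with hG_def
  set M : Matrix (Fin n) (Fin n) ℝ := G + c • 1 with hM_def
  set N : Matrix (Fin d) (Fin d) ℝ := Xᵀ * X + c • 1 with hN_def
  -- basic symmetry facts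
  have hGs : Gᵀ = G := by
    rw [hG_def, Matrix.transpose_mul, Matrix.transpose_transpose]
  have hMs : Mᵀ = M := by
    rw [hM_def, Matrix.transpose_add, hGs, Matrix.transpose_smul, Matrix.transpose_one]
  -- invertibility facts
  have hGi : G⁻¹ * G = 1 := Matrix.nonsing_inv_mul _ hX
  have hGi' : G * G⁻¹ = 1 := Matrix.mul_nonsing_inv _ hX
  have hGis : (G⁻¹)ᵀ = G⁻¹ := by
    rw [Matrix.transpose_nonsing_inv, hGs]
  have hGpsd : G.PosSemidef := by
    have := Matrix.posSemidef_self_mul_conjTranspose X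
    rwa [Matrix.conjTranspose_eq_transpose_of_trivial] at this
  have hNpsd : (Xᵀ * X).PosSemidef := by
    have := Matrix.posSemidef_conjTranspose_mul_self X
    rwa [Matrix.conjTranspose_eq_transpose_of_trivial] at this
  have hMpd : M.PosDef := Matrix.PosDef.posSemidef_add hGpsd (smul_one_posDef hc)
  have hNpd : N.PosDef := Matrix.PosDef.posSemidef_add hNpsd (smul_one_posDef hc)
  have hMdet : IsUnit M.det := hMpd.det_pos.ne'.isUnit
  have hNdet : IsUnit N.det := hNpd.det_pos.ne'.isUnit
  have hMi : M⁻¹ * M = 1 := Matrix.nonsing_inv_mul _ hMdet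
  have hMi' : M * M⁻¹ = 1 := Matrix.mul_nonsing_inv _ hMdet
  have hMis : (M⁻¹)ᵀ = M⁻¹ := by rw [Matrix.transpose_nonsing_inv, hMs]
  -- ridge identity: N⁻¹ Xᵀ = Xᵀ M⁻¹
  have hridge : N⁻¹ * Xᵀ = Xᵀ * M⁻¹ := by
    have hkey : N * (Xᵀ * M⁻¹) = Xᵀ := by
      rw [hN_def]
      have : (Xᵀ * X + c • 1) * Xᵀ = Xᵀ * M := by
        rw [hM_def, Matrix.add_mul, Matrix.mul_add, Matrix.smul_mul, Matrix.mul_smul,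
          Matrix.one_mul, Matrix.mul_one, Matrix.mul_assoc]
      rw [← Matrix.mul_assoc, this, Matrix.mul_assoc, hMi', Matrix.mul_one]
    calc N⁻¹ * Xᵀ = N⁻¹ * (N * (Xᵀ * M⁻¹)) := by rw [hkey]
    _ = Xᵀ * M⁻¹ := by rw [← Matrix.mul_assoc, Matrix.nonsing_inv_mul _ hNdet, Matrix.one_mul]
  -- OLS computations
  have hcard_n : Matrix.trace (1 : Matrix (Fin n) (Fin n) ℝ) = (n : ℝ) := by
    simp [Matrix.trace_one]
  have hcard_d : Matrix.trace (1 : Matrix (Fin d) (Fin d) ℝ) = (d : ℝ) := by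
    simp [Matrix.trace_one]
  set P : Matrix (Fin d) (Fin d) ℝ := Xᵀ * G⁻¹ * X with hP_def
  have hPs : Pᵀ = P := by
    simp [hP_def, Matrix.transpose_mul, hGis, Matrix.mul_assoc]
  have hPP : P * P = P := by
    rw [hP_def]
    calc Xᵀ * G⁻¹ * X * (Xᵀ * G⁻¹ * X)
        = Xᵀ * G⁻¹ * (X * Xᵀ) * (G⁻¹ * X) := by
          simp only [Matrix.mul_assoc]
      _ = Xᵀ * G⁻¹ * X := by
          rw [← hG_def, Matrix.mul_assoc (Xᵀ * G⁻¹), ← Matrix.mul_assoc G, hGi',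
            Matrix.one_mul]
  have htrP : Matrix.trace P = (n : ℝ) := by
    rw [hP_def, Matrix.mul_assoc, Matrix.trace_mul_comm, Matrix.mul_assoc, ← hG_def, hGi]
    simpa using hcard_n
  have t1 : frobSq (Xᵀ * (X * Xᵀ)⁻¹ * X - 1) = (d : ℝ) - (n : ℝ) := by
    have hA : Xᵀ * (X * Xᵀ)⁻¹ * X = P := by rw [hP_def, hG_def]
    rw [hA, frobSq, Matrix.transpose_sub, Matrix.transpose_one, hPs,
      Matrix.sub_mul, Matrix.mul_sub, Matrix.mul_sub, hPP, Matrix.mul_one, Matrix.one_mul]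
    simp only [Matrix.trace_sub, htrP, Matrix.trace_one]
    simp
  have t2 : frobSq (Xᵀ * (X * Xᵀ)⁻¹) = Matrix.trace G⁻¹ := by
    rw [frobSq, ← hG_def, Matrix.transpose_mul, Matrix.transpose_transpose, hGis]
    rw [Matrix.mul_assoc, ← Matrix.mul_assoc X, ← hG_def, ← Matrix.mul_assoc, hGi,
      Matrix.one_mul]
  -- Ridge computations
  set Q : Matrix (Fin d) (Fin d) ℝ := Xᵀ * M⁻¹ * X with hQ_def
  have hQs : Qᵀ = Q := by
    simp [hQ_def, Matrix.transpose_mul, hMis, Matrix.mul_assoc]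
  have htrQ : Matrix.trace Q = Matrix.trace (M⁻¹ * G) := by
    rw [hQ_def, Matrix.mul_assoc, Matrix.trace_mul_comm, Matrix.mul_assoc, ← hG_def]
  have htrQQ : Matrix.trace (Q * Q) = Matrix.trace (M⁻¹ * G * M⁻¹ * G) := by
    rw [hQ_def]
    calc Matrix.trace (Xᵀ * M⁻¹ * X * (Xᵀ * M⁻¹ * X))
        = Matrix.trace (Xᵀ * (M⁻¹ * (X * Xᵀ) * (M⁻¹ * X))) := by
          simp only [Matrix.mul_assoc]
      _ = Matrix.trace (M⁻¹ * (X * Xᵀ) * (M⁻¹ * X) * Xᵀ) := Matrix.trace_mul_comm _ _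
      _ = Matrix.trace (M⁻¹ * G * M⁻¹ * G) := by
          rw [← hG_def]
          simp only [Matrix.mul_assoc]
          rw [← hG_def]
  have t3 : frobSq (Q - 1)
      = Matrix.trace (M⁻¹ * G * M⁻¹ * G) - 2 * Matrix.trace (M⁻¹ * G) + (d : ℝ) := by
    rw [frobSq, Matrix.transpose_sub, Matrix.transpose_one, hQs,
      Matrix.sub_mul, Matrix.mul_sub, Matrix.mul_sub, Matrix.mul_one, Matrix.one_mul]
    simp only [Matrix.trace_sub, htrQQ, htrQ, Matrix.trace_one]
    simp
    ring
  have t4 : frobSq (Xᵀ * M⁻¹) = Matrix.trace (M⁻¹ * G * M⁻¹) := by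
    rw [frobSq, Matrix.transpose_mul, Matrix.transpose_transpose, hMis]
    rw [Matrix.mul_assoc, ← Matrix.mul_assoc X, ← hG_def, ← Matrix.mul_assoc]
  have t5 : Matrix.trace (M⁻¹ * G * M⁻¹ * G) + c * Matrix.trace (M⁻¹ * G * M⁻¹)
      = Matrix.trace (M⁻¹ * G) := by
    have : M⁻¹ * G * M⁻¹ * G + c • (M⁻¹ * G * M⁻¹) = M⁻¹ * G := by
      calc M⁻¹ * G * M⁻¹ * G + c • (M⁻¹ * G * M⁻¹)
          = M⁻¹ * G * M⁻¹ * (G + c • 1) := by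
            rw [Matrix.mul_add, Matrix.mul_smul, Matrix.mul_one]
        _ = M⁻¹ * G := by
            rw [← hM_def, Matrix.mul_assoc, hMi, Matrix.mul_one]
    calc Matrix.trace (M⁻¹ * G * M⁻¹ * G) + c * Matrix.trace (M⁻¹ * G * M⁻¹)
        = Matrix.trace (M⁻¹ * G * M⁻¹ * G + c • (M⁻¹ * G * M⁻¹)) := by
          rw [Matrix.trace_add, Matrix.trace_smul]; simp
      _ = Matrix.trace (M⁻¹ * G) := by rw [this]
  -- assemble
  have hAr : (Xᵀ * X + c • 1)⁻¹ * Xᵀ = Xᵀ * M⁻¹ := by rw [← hN_def]; exact hridge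
  have hRHStr : Matrix.trace (X * Xᵀ * (X * Xᵀ + c • 1)⁻¹) = Matrix.trace (M⁻¹ * G) := by
    rw [← hG_def, ← hM_def, Matrix.trace_mul_comm]
  rw [predErrIso, predErrIso, hAr, hRHStr, t2, ← hQ_def, t3, t4, t1]
  have hd' : (d : ℝ) ≠ 0 := by positivity
  have hσ2 : σ ^ 2 = c / d := by rw [hc_def]; field_simp
  rw [hσ2]
  set a : ℝ := Matrix.trace G⁻¹ with ha
  set b : ℝ := Matrix.trace (M⁻¹ * G) with hb
  set m : ℝ := Matrix.trace (M⁻¹ * G * M⁻¹) with hm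
  set q : ℝ := Matrix.trace (M⁻¹ * G * M⁻¹ * G) with hq
  have hq' : q = b - c * m := by linarith [t5]
  rw [hq']
  field_simp
  ring
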